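/- Under the same hypotheses — E a real inner product space, J : E → ℝ L-smooth with L > 0 and J ≤ J* everywhere, T ≥ 1, step size η = 1/(L√T), θ_0 deterministic, updates θ_{t+1} = θ_t + η·ĝ_t with θ_t 𝔽_t-measurable, E[ĝ_t | 𝔽_t] = ∇J(θ_t) and E[‖ĝ_t − ∇J(θ_t)‖² | 𝔽_t] ≤ σ² almost surely for 0 ≤ t < T — the minimum expected squared gradient norm over the trajectory satisfies min_{0 ≤ t < T} E[‖∇J(θ_t)‖²] ≤ 2LΔ/√T + σ²/√T, where Δ = J* − J(θ_0). -/

import Mathlib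

open MeasureTheory ProbabilityTheory
open scoped RealInnerProductSpace
set_option maxHeartbeats 1000000

section helpers
variable {Ω : Type*} {m mΩ : MeasurableSpace Ω} {μ : Measure Ω}
  {E : Type*} [NormedAddCommGroup E] [InnerProductSpace ℝ E] [CompleteSpace E]

lemma memLp_inner_integrable {h g : Ω → E} (hh : MemLp h 2 μ) (hg : MemLp g 2 μ) :
    Integrable (fun ω => ⟪h ω, g ω⟫) μ := by
  refine (L2.integrable_inner (𝕜 := ℝ) (hh.toLp h) (hg.toLp g)).congr ?_
  filter_upwards [hh.coeFn_toLp, hg.coeFn_toLp] with ω h1 h2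
  rw [h1, h2]

lemma memLp_normsq_integrable {f : Ω → E} (hf : MemLp f 2 μ) :
    Integrable (fun ω => ‖f ω‖ ^ 2) μ :=
  hf.norm.integrable_sq
end helpers


lemma smooth_taylor_bound {E : Type*} [NormedAddCommGroup E] [InnerProductSpace ℝ E]
    [CompleteSpace E] (J : E → ℝ) (gradJ : E → E) (L : ℝ) (hL : 0 ≤ L)
    (hdiff : ∀ x, HasGradientAt J (gradJ x) x)
    (hlip : ∀ x y, ‖gradJ x - gradJ y‖ ≤ L * ‖x - y‖) (x y : E) :
    |J y - J x - ⟪gradJ x, y - x⟫| ≤ L / 2 * ‖y - x‖ ^ 2 := by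
  set d := y - x with hd
  have hline : ∀ t : ℝ, HasDerivAt (fun s : ℝ => x + s • d) d t := by
    intro t
    simpa using ((hasDerivAt_id t).smul_const d).const_add x
  have key : ∀ t : ℝ, HasDerivAt (fun s : ℝ => J (x + s • d)) ⟪gradJ (x + t • d), d⟫ t := by
    intro t
    have h1 := (hdiff (x + t • d)).hasFDerivAt
    have := h1.comp_hasDerivAt t (hline t)
    simp at this
    exact this
  have hgradcont : Continuous gradJ :=
    (LipschitzWith.of_dist_le_mul (K := L.toNNReal) fun a b => by
      rw [dist_eq_norm, dist_eq_norm, Real.coe_toNNReal L hL]; exact hlip a b).continuous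
  have hcont : Continuous fun t : ℝ => ⟪gradJ (x + t • d), d⟫ := by
    exact (hgradcont.comp (by continuity)).inner continuous_const
  have hint : IntervalIntegrable (fun t : ℝ => ⟪gradJ (x + t • d), d⟫) volume 0 1 :=
    hcont.intervalIntegrable 0 1
  have heq : ∫ t in (0:ℝ)..1, ⟪gradJ (x + t • d), d⟫ = J y - J x := by
    have := intervalIntegral.integral_eq_sub_of_hasDerivAt (f := fun s : ℝ => J (x + s • d))
      (fun t _ => key t) hint
    simpa [hd] using this
  have hsplit : J y - J x - ⟪gradJ x, d⟫
      = ∫ t in (0:ℝ)..1, (⟪gradJ (x + t • d), d⟫ - ⟪gradJ x, d⟫) := by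
    rw [intervalIntegral.integral_sub hint intervalIntegrable_const, heq]
    simp
  rw [hsplit]
  have hbnd : ∀ t ∈ Set.uIoc (0:ℝ) 1,
      ‖⟪gradJ (x + t • d), d⟫ - ⟪gradJ x, d⟫‖ ≤ L * t * ‖d‖ ^ 2 := by
    intro t ht
    rw [Set.uIoc_of_le (by norm_num)] at ht
    have h1 : ⟪gradJ (x + t • d), d⟫ - ⟪gradJ x, d⟫ = ⟪gradJ (x + t • d) - gradJ x, d⟫ := by
      rw [inner_sub_left]
    rw [h1]
    calc ‖⟪gradJ (x + t • d) - gradJ x, d⟫‖ ≤ ‖gradJ (x + t • d) - gradJ x‖ * ‖d‖ :=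
          norm_inner_le_norm _ _
      _ ≤ (L * ‖(x + t • d) - x‖) * ‖d‖ := by
          gcongr; exact hlip _ _
      _ = L * t * ‖d‖ ^ 2 := by
          rw [add_sub_cancel_left, norm_smul, Real.norm_eq_abs, abs_of_pos ht.1]
          ring
  have hgint : IntervalIntegrable (fun t : ℝ => L * t * ‖d‖ ^ 2) volume 0 1 :=
    (continuous_const.mul continuous_id |>.mul continuous_const).intervalIntegrable 0 1
  have hnorm := intervalIntegral.norm_integral_le_abs_of_norm_le
    (g := fun t : ℝ => L * t * ‖d‖ ^ 2)
    ((ae_restrict_mem measurableSet_uIoc).mono hbnd) hgint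
  have hval : ∫ t in (0:ℝ)..1, L * t * ‖d‖ ^ 2 = L / 2 * ‖d‖ ^ 2 := by
    have : (fun t : ℝ => L * t * ‖d‖ ^ 2) = fun t : ℝ => (L * ‖d‖ ^ 2) * t := by
      funext t; ring
    rw [this, intervalIntegral.integral_const_mul, integral_id]
    ring
  rw [Real.norm_eq_abs] at hnorm
  calc |(∫ t in (0:ℝ)..1, (⟪gradJ (x + t • d), d⟫ - ⟪gradJ x, d⟫))| ≤ _ := hnorm
    _ = L / 2 * ‖d‖ ^ 2 := by
        rw [hval, abs_of_nonneg (by positivity)]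

lemma condExpL2_ae_eq_condexp' {Ω : Type*} {m mΩ : MeasurableSpace Ω} {μ : Measure Ω}
    [IsFiniteMeasure μ] (hm : m ≤ mΩ)
    {E : Type*} [NormedAddCommGroup E] [InnerProductSpace ℝ E] [CompleteSpace E]
    {f : Ω → E} (hf : MemLp f 2 μ) :
    (condExpL2 E ℝ hm (hf.toLp f) : Ω → E) =ᵐ[μ] μ[f | m] := by
  refine ae_eq_condExp_of_forall_setIntegral_eq hm (hf.integrable one_le_two) ?_ ?_ ?_
  · intro s hs hμs
    exact integrableOn_condExpL2_of_measure_ne_top hm hμs.ne _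
  · intro s hs hμs
    rw [integral_condExpL2_eq hm (hf.toLp f) hs hμs.ne]
    exact setIntegral_congr_ae (hm s hs) ((hf.coeFn_toLp).mono fun ω hω _ => hω)
  · exact lpMeas.aestronglyMeasurable _

lemma integral_inner_condexp {Ω : Type*} {m mΩ : MeasurableSpace Ω} {μ : Measure Ω}
    [IsFiniteMeasure μ] (hm : m ≤ mΩ)
    {E : Type*} [NormedAddCommGroup E] [InnerProductSpace ℝ E] [CompleteSpace E]
    {h g : Ω → E} (hh : MemLp h 2 μ) (hhm : AEStronglyMeasurable[m] h μ)
    (hg : MemLp g 2 μ) :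
    ∫ ω, ⟪h ω, g ω⟫ ∂μ = ∫ ω, ⟪h ω, (μ[g | m]) ω⟫ ∂μ := by
  have hH := hh.coeFn_toLp
  have hG := hg.coeFn_toLp
  have hHm : AEStronglyMeasurable[m] (hh.toLp h : Ω → E) μ := hhm.congr hH.symm
  have h1 : ∫ ω, ⟪h ω, g ω⟫ ∂μ = ⟪hg.toLp g, hh.toLp h⟫ := by
    rw [L2.inner_def]
    refine integral_congr_ae ?_
    filter_upwards [hH, hG] with ω h1 h2
    rw [h1, h2, real_inner_comm]
  have h2 : ⟪hg.toLp g, hh.toLp h⟫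
      = ⟪(condExpL2 E ℝ hm (hg.toLp g) : Lp E 2 μ), hh.toLp h⟫ :=
    (inner_condExpL2_eq_inner_fun hm (hg.toLp g) (hh.toLp h) hHm).symm
  rw [h1, h2, L2.inner_def]
  refine integral_congr_ae ?_
  filter_upwards [hH, condExpL2_ae_eq_condexp' hm hg] with ω h1 h2
  rw [h1, h2, real_inner_comm]

/-- **Convergence bound of stochastic gradient ascent for L-smooth objectives
(minimum form).** Let `J : E → ℝ` be `L`-smooth (`L > 0`) and bounded above by `J*`,
fix `T ≥ 1` and the step size `η = 1/(L√T)`. Starting from a deterministic `θ₀`, perform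
updates `θ_{t+1} = θ_t + η·ĝ_t`, where each `θ_t` is `𝔽_t`-measurable, each `ĝ_t` is
square-integrable, conditionally unbiased `E[ĝ_t | 𝔽_t] = ∇J(θ_t)`, and has conditional
variance bounded by `σ²` a.s. Then, with `Δ = J* − J(θ₀)`,
`min_{0 ≤ t < T} E[‖∇J(θ_t)‖²] ≤ 2LΔ/√T + σ²/√T`. -/
theorem sgd_convergence_bound_min
    {Ω : Type*} {mΩ : MeasurableSpace Ω} {μ : Measure Ω} [IsProbabilityMeasure μ]
    (ℱ : Filtration ℕ mΩ)
    {E : Type*} [NormedAddCommGroup E] [InnerProductSpace ℝ E] [CompleteSpace E]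
    (J : E → ℝ) (gradJ : E → E) (L : ℝ) (hL : 0 < L)
    (hdiff : ∀ x, HasGradientAt J (gradJ x) x)
    (hlip : ∀ x y, ‖gradJ x - gradJ y‖ ≤ L * ‖x - y‖)
    (Jstar : ℝ) (hbound : ∀ x, J x ≤ Jstar)
    (T : ℕ) (hT : 1 ≤ T)
    (η : ℝ) (hη : η = 1 / (L * Real.sqrt T))
    (θ₀ : E) (θ : ℕ → Ω → E) (g : ℕ → Ω → E) (σ2 : ℝ)
    (hθ0 : θ 0 = fun _ => θ₀)
    (hθsucc : ∀ t ω, θ (t + 1) ω = θ t ω + η • g t ω)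
    (hadapted : ∀ t, StronglyMeasurable[ℱ t] (θ t))
    (hgL2 : ∀ t, MemLp (g t) 2 μ)
    (hmean : ∀ t < T, μ[g t | ℱ t] =ᵐ[μ] fun ω => gradJ (θ t ω))
    (hvar : ∀ t < T,
      ∀ᵐ ω ∂μ, (μ[(fun ω' => ‖g t ω' - gradJ (θ t ω')‖ ^ 2) | ℱ t]) ω ≤ σ2) :
    (Finset.range T).inf' (Finset.nonempty_range_iff.mpr (by omega))
        (fun t => ∫ ω, ‖gradJ (θ t ω)‖ ^ 2 ∂μ)
      ≤ 2 * L * (Jstar - J θ₀) / Real.sqrt T + σ2 / Real.sqrt T := by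
  have hL0 : (0:ℝ) ≤ L := hL.le
  -- basic facts about √T and η
  have hT0 : (0:ℝ) ≤ (T:ℝ) := Nat.cast_nonneg T
  have hsT1 : (1:ℝ) ≤ Real.sqrt T := by
    rw [show (1:ℝ) = Real.sqrt 1 by simp]
    exact Real.sqrt_le_sqrt (by exact_mod_cast hT)
  have hsT0 : (0:ℝ) < Real.sqrt T := lt_of_lt_of_le one_pos hsT1
  have hsq : Real.sqrt T * Real.sqrt T = (T:ℝ) := Real.mul_self_sqrt hT0
  have hη0 : 0 < η := by rw [hη]; positivity
  have hLη : L * η = 1 / Real.sqrt T := by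
    rw [hη]; field_simp
  -- continuity
  have hgradcont : Continuous gradJ :=
    (LipschitzWith.of_dist_le_mul (K := L.toNNReal) fun a b => by
      rw [dist_eq_norm, dist_eq_norm, Real.coe_toNNReal L hL0]; exact hlip a b).continuous
  have hJcont : Continuous J :=
    Differentiable.continuous (fun x => (hdiff x).hasFDerivAt.differentiableAt)
  -- square-integrability of trajectory
  have hθL2 : ∀ t, MemLp (θ t) 2 μ := by
    intro t
    induction t with
    | zero => rw [hθ0]; exact memLp_const _
    | succ n ih =>
        have he : θ (n+1) = fun ω => θ n ω + η • g n ω := funext (hθsucc n)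
        rw [he]
        exact ih.add ((hgL2 n).const_smul η)
  have hθmeas : ∀ t, AEStronglyMeasurable (θ t) μ := fun t => (hθL2 t).1
  set G : ℕ → Ω → E := fun t ω => gradJ (θ t ω) with hG
  have hGL2 : ∀ t, MemLp (G t) 2 μ := by
    intro t
    have hgrow : ∀ x : E, ‖gradJ x‖ ≤ ‖gradJ 0‖ + L * ‖x‖ := by
      intro x
      calc ‖gradJ x‖ ≤ ‖gradJ x - gradJ 0‖ + ‖gradJ 0‖ := by
            simpa using norm_add_le (gradJ x - gradJ 0) (gradJ 0)
        _ ≤ L * ‖x - 0‖ + ‖gradJ 0‖ := by gcongr; exact hlip x 0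
        _ = ‖gradJ 0‖ + L * ‖x‖ := by rw [sub_zero]; ring
    have hbd : MemLp (fun ω => ‖gradJ 0‖ + L * ‖θ t ω‖) 2 μ :=
      (memLp_const (‖gradJ 0‖)).add ((hθL2 t).norm.const_mul L)
    refine MemLp.of_le hbd (hgradcont.comp_aestronglyMeasurable (hθmeas t)) ?_
    refine Filter.Eventually.of_forall fun ω => ?_
    have h1 := hgrow (θ t ω)
    have h2 : (0:ℝ) ≤ ‖gradJ 0‖ + L * ‖θ t ω‖ := by positivity
    rw [Real.norm_eq_abs, abs_of_nonneg h2]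
    exact h1
  have hGmeas : ∀ t, AEStronglyMeasurable[ℱ t] (G t) μ := fun t =>
    (hgradcont.comp_stronglyMeasurable (hadapted t)).aestronglyMeasurable
  -- integrability of J ∘ θ t
  have htaylor := smooth_taylor_bound J gradJ L hL0 hdiff hlip
  have hJint : ∀ t, Integrable (fun ω => J (θ t ω)) μ := by
    intro t
    have hub : ∀ ω, |J (θ t ω)| ≤
        |J θ₀| + ‖gradJ θ₀‖ * ‖θ t ω - θ₀‖ + L / 2 * ‖θ t ω - θ₀‖ ^ 2 := by
      intro ω
      have h1 := htaylor θ₀ (θ t ω)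
      have h2 : |J (θ t ω)| ≤ |J θ₀| + |⟪gradJ θ₀, θ t ω - θ₀⟫| + L / 2 * ‖θ t ω - θ₀‖ ^ 2 := by
        have := abs_sub_abs_le_abs_sub (J (θ t ω)) (J θ₀ + ⟪gradJ θ₀, θ t ω - θ₀⟫)
        have h3 : |J θ₀ + ⟪gradJ θ₀, θ t ω - θ₀⟫| ≤ |J θ₀| + |⟪gradJ θ₀, θ t ω - θ₀⟫| :=
          abs_add_le _ _
        have h4 : |J (θ t ω) - (J θ₀ + ⟪gradJ θ₀, θ t ω - θ₀⟫)| ≤ L / 2 * ‖θ t ω - θ₀‖ ^ 2 := by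
          rw [show J (θ t ω) - (J θ₀ + ⟪gradJ θ₀, θ t ω - θ₀⟫)
              = J (θ t ω) - J θ₀ - ⟪gradJ θ₀, θ t ω - θ₀⟫ by ring]
          exact h1
        linarith
      have h5 : |⟪gradJ θ₀, θ t ω - θ₀⟫| ≤ ‖gradJ θ₀‖ * ‖θ t ω - θ₀‖ := by
        simpa using norm_inner_le_norm (𝕜 := ℝ) (gradJ θ₀) (θ t ω - θ₀)
      linarith
    have hθsub : MemLp (fun ω => θ t ω - θ₀) 2 μ := (hθL2 t).sub (memLp_const θ₀)
    have hint : Integrable (fun ω =>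
        |J θ₀| + ‖gradJ θ₀‖ * ‖θ t ω - θ₀‖ + L / 2 * ‖θ t ω - θ₀‖ ^ 2) μ := by
      refine ((integrable_const _).add ?_).add ?_
      · exact (hθsub.norm.integrable one_le_two).const_mul _
      · exact (memLp_normsq_integrable hθsub).const_mul _
    refine hint.mono' (hJcont.comp_aestronglyMeasurable (hθmeas t)) ?_
    refine Filter.Eventually.of_forall fun ω => ?_
    rw [Real.norm_eq_abs]
    exact hub ω
  set F : ℕ → ℝ := fun t => ∫ ω, J (θ t ω) ∂μ with hF
  set A : ℕ → ℝ := fun t => ∫ ω, ‖gradJ (θ t ω)‖ ^ 2 ∂μ with hA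
  have hA0 : ∀ t, 0 ≤ A t := fun t => integral_nonneg fun ω => by positivity
  -- cross term
  have hinner : ∀ t < T, ∫ ω, ⟪G t ω, g t ω⟫ ∂μ = A t := by
    intro t ht
    rw [integral_inner_condexp (ℱ.le t) (hGL2 t) (hGmeas t) (hgL2 t)]
    calc ∫ ω, ⟪G t ω, (μ[g t | ℱ t]) ω⟫ ∂μ = ∫ ω, ⟪G t ω, G t ω⟫ ∂μ := by
          refine integral_congr_ae ?_
          filter_upwards [hmean t ht] with ω hω
          rw [hω]
      _ = A t := by
          simp only [hA, hG, real_inner_self_eq_norm_sq]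
  -- second moment bound
  have hBle : ∀ t < T, ∫ ω, ‖g t ω‖ ^ 2 ∂μ ≤ A t + σ2 := by
    intro t ht
    have hsubL2 : MemLp (fun ω => g t ω - G t ω) 2 μ := (hgL2 t).sub (hGL2 t)
    have hqint : Integrable (fun ω => ‖g t ω - G t ω‖ ^ 2) μ := memLp_normsq_integrable hsubL2
    have hvarint : ∫ ω, ‖g t ω - G t ω‖ ^ 2 ∂μ ≤ σ2 := by
      have h1 : ∫ ω, ‖g t ω - G t ω‖ ^ 2 ∂μ
          = ∫ ω, (μ[(fun ω' => ‖g t ω' - gradJ (θ t ω')‖ ^ 2) | ℱ t]) ω ∂μ :=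
        (integral_condExp (ℱ.le t)).symm
      rw [h1]
      calc ∫ ω, (μ[(fun ω' => ‖g t ω' - gradJ (θ t ω')‖ ^ 2) | ℱ t]) ω ∂μ
          ≤ ∫ _ω, σ2 ∂μ := integral_mono_ae integrable_condExp (integrable_const _) (hvar t ht)
        _ = σ2 := by simp
    have hexpand : ∀ ω, ‖g t ω‖ ^ 2
        = ‖g t ω - G t ω‖ ^ 2 + 2 * ⟪G t ω, g t ω⟫ - ‖G t ω‖ ^ 2 := by
      intro ω
      have := norm_sub_sq_real (g t ω) (G t ω)
      have h2 : ⟪g t ω, G t ω⟫ = ⟪G t ω, g t ω⟫ := real_inner_comm _ _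
      nlinarith [this]
    have hsum : ∫ ω, ‖g t ω‖ ^ 2 ∂μ
        = (∫ ω, ‖g t ω - G t ω‖ ^ 2 ∂μ) + 2 * (∫ ω, ⟪G t ω, g t ω⟫ ∂μ) - A t := by
      have hi1 : Integrable (fun ω => ⟪G t ω, g t ω⟫) μ :=
        memLp_inner_integrable (hGL2 t) (hgL2 t)
      have hi2 : Integrable (fun ω => ‖G t ω‖ ^ 2) μ := memLp_normsq_integrable (hGL2 t)
      have hiadd : Integrable (fun ω => ‖g t ω - G t ω‖ ^ 2 + 2 * ⟪G t ω, g t ω⟫) μ :=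
        hqint.add (hi1.const_mul 2)
      rw [show (fun ω => ‖g t ω‖ ^ 2)
          = fun ω => ‖g t ω - G t ω‖ ^ 2 + 2 * ⟪G t ω, g t ω⟫ - ‖G t ω‖ ^ 2 from
          funext hexpand]
      rw [integral_sub hiadd hi2, integral_add hqint (hi1.const_mul 2), integral_const_mul]
    rw [hsum, hinner t ht]
    linarith
  -- per-step descent
  have hstep : ∀ t < T, F t + (η * A t - L / 2 * η ^ 2 * (A t + σ2)) ≤ F (t + 1) := by
    intro t ht
    have hpt : ∀ ω, J (θ t ω) + η * ⟪G t ω, g t ω⟫ - L / 2 * η ^ 2 * ‖g t ω‖ ^ 2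
        ≤ J (θ (t+1) ω) := by
      intro ω
      have hyx : θ (t+1) ω - θ t ω = η • g t ω := by rw [hθsucc t ω]; abel
      have h1 := htaylor (θ t ω) (θ (t+1) ω)
      rw [hyx] at h1
      have h2 : ⟪gradJ (θ t ω), η • g t ω⟫ = η * ⟪G t ω, g t ω⟫ := real_inner_smul_right _ _ _
      have h3 : ‖η • g t ω‖ ^ 2 = η ^ 2 * ‖g t ω‖ ^ 2 := by
        rw [norm_smul, mul_pow, Real.norm_eq_abs, sq_abs]
      rw [h2, h3] at h1
      have h4 := abs_le.mp h1
      have := h4.1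
      nlinarith
    have hi1 : Integrable (fun ω => ⟪G t ω, g t ω⟫) μ :=
      memLp_inner_integrable (hGL2 t) (hgL2 t)
    have hi2 : Integrable (fun ω => ‖g t ω‖ ^ 2) μ := memLp_normsq_integrable (hgL2 t)
    have hiadd : Integrable (fun ω => J (θ t ω) + η * ⟪G t ω, g t ω⟫) μ :=
      (hJint t).add (hi1.const_mul η)
    have himul : Integrable (fun ω => L / 2 * η ^ 2 * ‖g t ω‖ ^ 2) μ :=
      hi2.const_mul _
    have hiL : Integrable (fun ω =>
        J (θ t ω) + η * ⟪G t ω, g t ω⟫ - L / 2 * η ^ 2 * ‖g t ω‖ ^ 2) μ :=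
      hiadd.sub himul
    have hmono := integral_mono hiL (hJint (t+1)) hpt
    have hlhs : ∫ ω, (J (θ t ω) + η * ⟪G t ω, g t ω⟫ - L / 2 * η ^ 2 * ‖g t ω‖ ^ 2) ∂μ
        = F t + η * A t - L / 2 * η ^ 2 * (∫ ω, ‖g t ω‖ ^ 2 ∂μ) := by
      rw [integral_sub hiadd himul,
        integral_add (hJint t) (hi1.const_mul η), integral_const_mul, integral_const_mul,
        hinner t ht]
    rw [hlhs] at hmono
    have hc : (0:ℝ) ≤ L / 2 * η ^ 2 := by positivity
    have hB := hBle t ht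
    calc F t + (η * A t - L / 2 * η ^ 2 * (A t + σ2))
        ≤ F t + η * A t - L / 2 * η ^ 2 * (∫ ω, ‖g t ω‖ ^ 2 ∂μ) := by
          have := mul_le_mul_of_nonneg_left hB hc
          linarith
      _ ≤ F (t+1) := hmono
  -- telescope
  have hsum : F 0 + ∑ t ∈ Finset.range T, (η * A t - L / 2 * η ^ 2 * (A t + σ2)) ≤ F T := by
    have key : ∀ n ≤ T, F 0 + ∑ t ∈ Finset.range n, (η * A t - L / 2 * η ^ 2 * (A t + σ2))
        ≤ F n := by
      intro n hn
      induction n with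
      | zero => simp
      | succ k ih =>
          have hk : k < T := hn
          have h1 := ih (Nat.le_of_succ_le hn)
          have h2 := hstep k hk
          rw [Finset.sum_range_succ]
          linarith
    exact key T le_rfl
  have hFT : F T ≤ Jstar := by
    calc F T ≤ ∫ _ω, Jstar ∂μ := integral_mono (hJint T) (integrable_const _)
          (fun ω => hbound (θ T ω))
      _ = Jstar := by simp
  have hF0 : F 0 = J θ₀ := by
    simp [hF, hθ0]
  -- bound on the sum of A
  set S : ℝ := ∑ t ∈ Finset.range T, A t with hS
  have hS0 : 0 ≤ S := Finset.sum_nonneg fun t _ => hA0 t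
  have hsum2 : η / 2 * S ≤ Jstar - J θ₀ + (T:ℝ) * (L / 2 * η ^ 2 * σ2) := by
    have h1 : ∑ t ∈ Finset.range T, (η * A t - L / 2 * η ^ 2 * (A t + σ2))
        ≥ η / 2 * S - (T:ℝ) * (L / 2 * η ^ 2 * σ2) := by
      have hηL2 : L / 2 * η ^ 2 ≤ η / 2 := by
        have h2 : L * η ≤ 1 := by rw [hLη]; rw [div_le_one hsT0]; exact hsT1
        nlinarith
      have h3 : ∀ t ∈ Finset.range T, η / 2 * A t - L / 2 * η ^ 2 * σ2
          ≤ η * A t - L / 2 * η ^ 2 * (A t + σ2) := by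
        intro t _
        have := hA0 t
        nlinarith
      calc η / 2 * S - (T:ℝ) * (L / 2 * η ^ 2 * σ2)
          = ∑ t ∈ Finset.range T, (η / 2 * A t - L / 2 * η ^ 2 * σ2) := by
            rw [Finset.sum_sub_distrib, ← Finset.mul_sum, Finset.sum_const, Finset.card_range,
              nsmul_eq_mul, hS]
        _ ≤ _ := Finset.sum_le_sum h3
    have := hsum
    rw [hF0] at this
    linarith [hFT]
  -- convert to the final bound
  have hSle : S ≤ 2 * L * (Jstar - J θ₀) * Real.sqrt T + Real.sqrt T * σ2 := by
    have hη2 : η / 2 > 0 := by positivity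
    rw [hη] at hsum2
    have hLT : L * Real.sqrt T ≠ 0 := by positivity
    have e1 : (1 / (L * Real.sqrt T)) / 2 * S
        ≤ Jstar - J θ₀ + (T:ℝ) * (L / 2 * (1 / (L * Real.sqrt T)) ^ 2 * σ2) := hsum2
    have e2 : (T:ℝ) * (L / 2 * (1 / (L * Real.sqrt T)) ^ 2 * σ2) = σ2 / (2 * L) := by
      have hs2 : Real.sqrt T ^ 2 = (T:ℝ) := Real.sq_sqrt hT0
      rw [div_pow, mul_pow, one_pow, hs2]
      field_simp
    rw [e2] at e1
    have e3 : S ≤ (2 * L * Real.sqrt T) * (Jstar - J θ₀ + σ2 / (2 * L)) := by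
      have := mul_le_mul_of_nonneg_left e1 (le_of_lt (by positivity : (0:ℝ) < 2 * L * Real.sqrt T))
      calc S = (2 * L * Real.sqrt T) * ((1 / (L * Real.sqrt T)) / 2 * S) := by
            field_simp
        _ ≤ (2 * L * Real.sqrt T) * (Jstar - J θ₀ + σ2 / (2 * L)) := this
    calc S ≤ (2 * L * Real.sqrt T) * (Jstar - J θ₀ + σ2 / (2 * L)) := e3
      _ = 2 * L * (Jstar - J θ₀) * Real.sqrt T + Real.sqrt T * σ2 := by
          field_simp
  -- min ≤ average
  have hmin : (Finset.range T).inf' (Finset.nonempty_range_iff.mpr (by omega))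
      (fun t => ∫ ω, ‖gradJ (θ t ω)‖ ^ 2 ∂μ) ≤ S / (T:ℝ) := by
    set M := (Finset.range T).inf' (Finset.nonempty_range_iff.mpr (by omega))
      (fun t => ∫ ω, ‖gradJ (θ t ω)‖ ^ 2 ∂μ) with hM
    have hTM : (T:ℝ) * M ≤ S := by
      calc (T:ℝ) * M = ∑ _t ∈ Finset.range T, M := by
            rw [Finset.sum_const, Finset.card_range, nsmul_eq_mul]
        _ ≤ S := Finset.sum_le_sum fun t htt => Finset.inf'_le _ htt
    have hTpos : (0:ℝ) < T := by exact_mod_cast hT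
    rw [le_div_iff₀ hTpos]
    linarith [hTM]
  refine le_trans hmin ?_
  calc S / (T:ℝ)
      ≤ (2 * L * (Jstar - J θ₀) * Real.sqrt T + Real.sqrt T * σ2) / (T:ℝ) := by
        have hTpos : (0:ℝ) < T := by exact_mod_cast hT
        exact div_le_div_of_nonneg_right hSle hTpos.le
    _ = 2 * L * (Jstar - J θ₀) / Real.sqrt T + σ2 / Real.sqrt T := by
        have hT0' : (T:ℝ) ≠ 0 := by positivity
        field_simp
        ring_nf
        rw [Real.sq_sqrt hT0]
        ring
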